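/- Let {α_m : m ≥ 0} be a set of positive integers with α_{m+1}/α_m → ∞, let (I_n)_{n≥1} be a partition of {α_m : m ≥ 0} into infinitely many infinite subsets, and for each n let ω_n be a nonprincipal ultrafilter on the positive integers with I_n ∈ ω_n. Then for every subset M of the positive integers there exists a nonempty subset J of the positive integers such that {n : Cone_{ω_n}(J) = {0}} = M; that is, the map J ↦ {n : Cone_{ω_n}(J) = {0}} from subsets of the positive integers to subsets of the positive integers is surjective. -/

import Mathlib

open Filter

noncomputable section

/-- The asymptotic cone of a set `J` of positive integers along the ultrafilter `ω`,
identified with a subset of `ℝ`: the set of ultralimits `lim_ω u_n/n` of sequences in `J`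
with at most linear growth. -/
def coneSet (ω : Ultrafilter ℕ) (J : Set ℕ) : Set ℝ :=
  {r | ∃ u : ℕ → ℕ, (∀ n, u n ∈ J) ∧ (∃ C : ℝ, ∀ n : ℕ, 1 ≤ n → (u n : ℝ) ≤ C * n) ∧
    Tendsto (fun n => (u n : ℝ) / n) ω (nhds r)}

/-- Theorem: let `{α_m}` be a set of positive integers with `α_{m+1}/α_m → ∞`, let `(I_n)`
be a partition of it into infinitely many infinite pieces, and for each `n` let `ω_n` be a
nonprincipal ultrafilter containing `I_n`. Then every set `M` of indices arises as
`{n : Cone_{ω_n}(J) = {0}}` for some nonempty set `J` of positive integers; i.e. the map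
`J ↦ {n : Cone_{ω_n}(J) = {0}}` is surjective. -/
theorem statement12 (α : ℕ → ℕ) (hαpos : ∀ m, 0 < α m)
    (hα : Tendsto (fun m => (α (m + 1) : ℝ) / (α m : ℝ)) atTop atTop)
    (I : ℕ → Set ℕ)
    (hIdisj : Pairwise (Function.onFun Disjoint I))
    (hIcover : (⋃ n, I n) = Set.range α)
    (hIinf : ∀ n, (I n).Infinite)
    (ω : ℕ → Ultrafilter ℕ) (hω : ∀ n, ((ω n : Filter ℕ)) ≤ Filter.cofinite)
    (hωI : ∀ n, I n ∈ ω n) :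
    ∀ M : Set ℕ, ∃ J : Set ℕ, J.Nonempty ∧ (∀ x ∈ J, 0 < x) ∧
      {n : ℕ | coneSet (ω n) J = {0}} = M := by
  intro M
  classical
  set J : Set ℕ := {α 0} ∪ ⋃ (n) (_ : n ∉ M), I n with hJdef
  have hJα0 : α 0 ∈ J := Or.inl rfl
  have hIrange : ∀ n, I n ⊆ Set.range α := by
    intro n x hx
    rw [← hIcover]
    exact Set.mem_iUnion.mpr ⟨n, hx⟩
  have hJrange : J ⊆ Set.range α := by
    intro x hx
    rcases hx with h | h
    · exact ⟨0, h.symm⟩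
    · simp only [Set.mem_iUnion] at h
      rcases h with ⟨n, _, hx⟩
      exact hIrange n hx
  have hrangepos : ∀ x ∈ Set.range α, 0 < x := by
    rintro x ⟨m, rfl⟩
    exact hαpos m
  refine ⟨J, ⟨α 0, hJα0⟩, fun x hx => hrangepos x (hJrange hx), ?_⟩
  have hωtop : ∀ n, (ω n : Filter ℕ) ≤ atTop := fun n => Nat.cofinite_eq_atTop ▸ hω n
  -- 0 is always in the cone (via the constant sequence α 0)
  have hzero : ∀ n, (0 : ℝ) ∈ coneSet (ω n) J := by
    intro n
    refine ⟨fun _ => α 0, fun _ => hJα0, ⟨α 0, fun k hk => ?_⟩, ?_⟩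
    · have hk1 : (1 : ℝ) ≤ k := by exact_mod_cast hk
      have h0 : (0 : ℝ) ≤ (α 0 : ℝ) := by positivity
      nlinarith
    · have h : Tendsto (fun k : ℕ => (α 0 : ℝ) / k) atTop (nhds 0) :=
        tendsto_const_nhds.div_atTop tendsto_natCast_atTop_atTop
      exact h.mono_left (hωtop n)
  ext n
  simp only [Set.mem_setOf_eq]
  constructor
  · -- if the cone is {0} then n ∈ M
    intro hcone
    by_contra hnM
    have h1 : (1 : ℝ) ∈ coneSet (ω n) J := by
      refine ⟨fun k => if k ∈ I n then k else α 0, ?_, ⟨(α 0 : ℝ) + 1, ?_⟩, ?_⟩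
      · intro k
        by_cases hk : k ∈ I n
        · simp only [hk, if_true]
          exact Or.inr (Set.mem_iUnion.mpr ⟨n, Set.mem_iUnion.mpr ⟨hnM, hk⟩⟩)
        · simp only [hk, if_false]
          exact hJα0
      · intro k hk
        have hk1 : (1 : ℝ) ≤ k := by exact_mod_cast hk
        have h0 : (0 : ℝ) ≤ (α 0 : ℝ) := by positivity
        by_cases h : k ∈ I n <;> simp only [h, if_true, if_false] <;> nlinarith
      · apply Tendsto.congr' _ (tendsto_const_nhds (x := (1 : ℝ)))
        filter_upwards [hωI n] with k hk
        have hkpos : 0 < k := hrangepos k (hIrange n hk)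
        have hkpos' : (0 : ℝ) < k := by exact_mod_cast hkpos
        simp only [hk, if_true]
        field_simp
    rw [hcone] at h1
    exact one_ne_zero h1
  · -- if n ∈ M then the cone is {0}
    intro hnM
    apply Set.eq_singleton_iff_unique_mem.mpr ⟨hzero n, ?_⟩
    rintro r ⟨u, huJ, ⟨C, hC⟩, hT⟩
    by_contra hr0
    have hrnonneg : (0 : ℝ) ≤ r := by
      refine ge_of_tendsto' hT fun k => by positivity
    have hr : 0 < r := lt_of_le_of_ne hrnonneg (Ne.symm hr0)
    obtain ⟨D, hDC, hDr, hD1⟩ : ∃ D : ℝ, C < D ∧ 2 / r < D ∧ 1 ≤ D := by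
      refine ⟨max C (2 / r) + 1, ?_, ?_, ?_⟩
      · have := le_max_left C (2 / r); linarith
      · have := le_max_right C (2 / r); linarith
      · have h1 : (0 : ℝ) < 2 / r := by positivity
        have h2 := le_max_right C (2 / r); linarith
    -- eventual gap condition
    obtain ⟨m₀, hm₀⟩ := eventually_atTop.mp (hα.eventually (eventually_gt_atTop D))
    have hgap : ∀ m, m₀ ≤ m → D * (α m : ℝ) < (α (m + 1) : ℝ) := by
      intro m hm
      have h := hm₀ m hm
      have hpos : (0 : ℝ) < (α m : ℝ) := by exact_mod_cast hαpos m
      exact (lt_div_iff₀ hpos).mp h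
    have hstep : ∀ m, m₀ ≤ m → α m < α (m + 1) := by
      intro m hm
      have h := hgap m hm
      have hpos : (0 : ℝ) ≤ (α m : ℝ) := by positivity
      have : (α m : ℝ) < (α (m + 1) : ℝ) := by nlinarith
      exact_mod_cast this
    have hmono : ∀ a b, m₀ ≤ a → a ≤ b → α a ≤ α b := by
      intro a b ha hab
      induction b, hab using Nat.le_induction with
      | base => exact le_refl _
      | succ b hb ih => exact le_trans ih (le_of_lt (hstep b (le_trans ha hb)))
    set B : ℕ := (Finset.range (m₀ + 1)).sup α with hBdef
    have hB : ∀ j, j ≤ m₀ → α j ≤ B :=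
      fun j hj => Finset.le_sup (Finset.mem_range.mpr (Nat.lt_succ_of_le hj))
    -- gather eventual facts along ω n
    have hev : ∀ᶠ k in (ω n : Filter ℕ),
        k ∈ I n ∧ (u k : ℝ) ≤ C * k ∧ r / 2 < (u k : ℝ) / k ∧
          ((B : ℝ) * (2 / r) < k ∧ (B : ℝ) < k) := by
      have e1 : ∀ᶠ k in (ω n : Filter ℕ), k ∈ I n := by
        filter_upwards [hωI n] with k hk using hk
      have e2 : ∀ᶠ k in (ω n : Filter ℕ), (u k : ℝ) ≤ C * k := by
        have : ∀ᶠ k in (atTop : Filter ℕ), (u k : ℝ) ≤ C * k := by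
          filter_upwards [eventually_ge_atTop 1] with k hk using hC k hk
        exact this.filter_mono (hωtop n)
      have e3 : ∀ᶠ k in (ω n : Filter ℕ), r / 2 < (u k : ℝ) / k :=
        hT.eventually (eventually_gt_nhds (by linarith))
      have e4 : ∀ᶠ (k : ℕ) in (ω n : Filter ℕ), (B : ℝ) * (2 / r) < (k : ℝ) := by
        have h : ∀ᶠ (k : ℕ) in (atTop : Filter ℕ), (B : ℝ) * (2 / r) < (k : ℝ) :=
          (tendsto_natCast_atTop_atTop (R := ℝ)).eventually (eventually_gt_atTop _)
        exact h.filter_mono (hωtop n)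
      have e5 : ∀ᶠ (k : ℕ) in (ω n : Filter ℕ), (B : ℝ) < (k : ℝ) := by
        have h : ∀ᶠ (k : ℕ) in (atTop : Filter ℕ), (B : ℝ) < (k : ℝ) :=
          (tendsto_natCast_atTop_atTop (R := ℝ)).eventually (eventually_gt_atTop _)
        exact h.filter_mono (hωtop n)
      exact e1.and (e2.and (e3.and (e4.and e5)))
    obtain ⟨k, hkI, hkC, hkr, hkB2, hBk⟩ := hev.exists
    obtain ⟨m, hm⟩ := hIrange n hkI
    -- basic numeric facts
    have hBnn : (0 : ℝ) ≤ (B : ℝ) := by positivity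
    have hk0 : (0 : ℝ) < k := lt_of_le_of_lt hBnn hBk
    have hku : r / 2 * k < (u k : ℝ) := (lt_div_iff₀ hk0).mp hkr
    have hBsmall : (B : ℝ) < r / 2 * k := by
      have h := mul_lt_mul_of_pos_right hkB2 (show (0 : ℝ) < r / 2 by positivity)
      have heq : (B : ℝ) * (2 / r) * (r / 2) = B := by field_simp
      rw [heq] at h
      linarith
    have hm₀m : m₀ ≤ m := by
      by_contra h
      push_neg at h
      have : α m ≤ B := hB m (le_of_lt h)
      have : (α m : ℝ) ≤ B := by exact_mod_cast this
      rw [hm] at this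
      linarith
    -- u k ∈ J: analyze cases
    rcases huJ k with hu | hu
    · -- u k = α 0
      have : (u k : ℝ) ≤ B := by
        have := hB 0 (Nat.zero_le _)
        have h2 : u k ≤ B := hu ▸ this
        exact_mod_cast h2
      linarith
    · simp only [Set.mem_iUnion] at hu
      obtain ⟨n', hn'M, hun'⟩ := hu
      obtain ⟨m', hm'⟩ := hIrange n' hun'
      rcases lt_trichotomy m' m with hlt | heq | hgt
      · -- m' < m
        by_cases hm'₀ : m' < m₀
        · have h1 : α m' ≤ B := hB m' (le_of_lt hm'₀)
          have h2 : (α m' : ℝ) ≤ B := by exact_mod_cast h1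
          rw [hm'] at h2
          linarith
        · push_neg at hm'₀
          have hmge : m₀ + 1 ≤ m := by omega
          have h1 : α m' ≤ α (m - 1) := hmono m' (m - 1) hm'₀ (by omega)
          have h2 : D * (α (m - 1) : ℝ) < (α m : ℝ) := by
            have := hgap (m - 1) (by omega)
            rwa [Nat.sub_add_cancel (by omega : 1 ≤ m)] at this
          have h3 : (α m' : ℝ) ≤ (α (m - 1) : ℝ) := by exact_mod_cast h1
          have h4 : (0 : ℝ) ≤ (α (m - 1) : ℝ) := by positivity
          -- α(m-1) < (r/2) α m since D > 2/r
          have h5 : (2 / r) * (α (m - 1) : ℝ) < (α m : ℝ) := by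
            have := mul_le_mul_of_nonneg_right (le_of_lt hDr) h4
            linarith
          have h6 : (α (m - 1) : ℝ) < r / 2 * (α m : ℝ) := by
            have h := mul_lt_mul_of_pos_left h5 (show (0 : ℝ) < r / 2 by positivity)
            have heq : r / 2 * (2 / r * (α (m - 1) : ℝ)) = (α (m - 1) : ℝ) := by
              field_simp
            rw [heq] at h
            linarith
          rw [hm] at h6
          rw [← hm'] at hku
          linarith
      · -- m' = m : u k = k, so k ∈ I n ∩ I n'
        have hukk : u k = k := by rw [← hm', heq, hm]
        have hne : n ≠ n' := fun h => hn'M (h ▸ hnM)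
        have hdisj := hIdisj hne
        exact (Set.disjoint_left.mp hdisj hkI) (hukk ▸ hun')
      · -- m < m'
        have h1 : α (m + 1) ≤ α m' := hmono (m + 1) m' (by omega) hgt
        have h2 : D * (α m : ℝ) < (α (m + 1) : ℝ) := hgap m hm₀m
        have h3 : (α (m + 1) : ℝ) ≤ (α m' : ℝ) := by exact_mod_cast h1
        have h4 : (0 : ℝ) < (α m : ℝ) := by exact_mod_cast hαpos m
        have h5 : C * (α m : ℝ) < (α m' : ℝ) := by
          have := mul_lt_mul_of_pos_right hDC h4
          linarith
        rw [hm] at h5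
        rw [← hm'] at hkC
        linarith

end
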